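/- Abstract primitive divisor argument: Let h > 0 be a real number, C ≥ 0 a constant, and (d_n)_{n≥1} a sequence of nonnegative reals with |d_n - n²h| ≤ C for all n. Suppose for some n one has d_n ≤ ∑_{m|n, m<n} d_m. Then n is bounded by a constant depending only on h and C; explicitly, n²h·(1 - (ζ(2)-1)) ≤ C·(1 + number of divisors of n), which forces n ≤ N(h, C) for some explicit N. -/

import Mathlib

open Real

lemma sum_inv_sq_le (n : ℕ) : ∑ k ∈ Finset.Icc 2 n, (1 : ℝ) / (k : ℝ) ^ 2 ≤ π ^ 2 / 6 - 1 := by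
  have h1 : (1 : ℕ) ∉ Finset.Icc 2 n := by simp
  have := sum_le_hasSum (insert 1 (Finset.Icc 2 n))
    (fun k _ => by positivity) hasSum_zeta_two
  rw [Finset.sum_insert h1] at this
  simp only [one_div] at this ⊢
  linarith

lemma sum_sq_properDivisors (n : ℕ) (hn : 1 ≤ n) :
    ∑ m ∈ n.properDivisors, (m : ℝ) ^ 2 ≤ (n : ℝ) ^ 2 * (π ^ 2 / 6 - 1) := by
  have hn0 : n ≠ 0 := by omega
  have hinj : ∀ x ∈ n.properDivisors, ∀ y ∈ n.properDivisors, n / x = n / y → x = y := by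
    intro x hx y hy hxy
    rw [Nat.mem_properDivisors] at hx hy
    have hx' := Nat.div_div_self hx.1 hn0
    have hy' := Nat.div_div_self hy.1 hn0
    rw [← hx', ← hy', hxy]
  have key : ∑ m ∈ n.properDivisors, (m : ℝ) ^ 2
      = ∑ k ∈ n.properDivisors.image (n / ·), ((n / k : ℕ) : ℝ) ^ 2 := by
    rw [Finset.sum_image hinj]
    apply Finset.sum_congr rfl
    intro m hm
    rw [Nat.mem_properDivisors] at hm
    rw [Nat.div_div_self hm.1 hn0]
  rw [key]
  have hsub : n.properDivisors.image (n / ·) ⊆ Finset.Icc 2 n := by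
    intro k hk
    simp only [Finset.mem_image] at hk
    obtain ⟨m, hm, rfl⟩ := hk
    rw [Nat.mem_properDivisors] at hm
    have hmpos : 0 < m := Nat.pos_of_mem_properDivisors (Nat.mem_properDivisors.2 hm)
    have h1 : n / m ≤ n := Nat.div_le_self n m
    have h2 : 2 ≤ n / m := by
      rcases Nat.lt_or_ge (n / m) 2 with hlt | hge
      · exfalso
        interval_cases hnm : n / m
        · have := (Nat.div_eq_zero_iff.mp hnm).resolve_left (by omega)
          have := Nat.le_of_dvd (by omega) hm.1
          omega
        · have : m = n := by
            have := Nat.div_div_self hm.1 hn0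
            rw [hnm] at this
            simpa using this.symm
          omega
      · exact hge
    exact Finset.mem_Icc.2 ⟨h2, h1⟩
  calc ∑ k ∈ n.properDivisors.image (n / ·), ((n / k : ℕ) : ℝ) ^ 2
      ≤ ∑ k ∈ Finset.Icc 2 n, ((n / k : ℕ) : ℝ) ^ 2 :=
        Finset.sum_le_sum_of_subset_of_nonneg hsub (fun k _ _ => by positivity)
    _ ≤ ∑ k ∈ Finset.Icc 2 n, (n : ℝ) ^ 2 * ((1 : ℝ) / (k : ℝ) ^ 2) := by
        apply Finset.sum_le_sum
        intro k hk
        have hk2 : 2 ≤ k := (Finset.mem_Icc.1 hk).1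
        have hkpos : (0 : ℝ) < (k : ℝ) ^ 2 := by positivity
        have hle : ((n / k : ℕ) : ℝ) ≤ (n : ℝ) / (k : ℝ) := Nat.cast_div_le
        have hnonneg : (0 : ℝ) ≤ ((n / k : ℕ) : ℝ) := by positivity
        calc ((n / k : ℕ) : ℝ) ^ 2 ≤ ((n : ℝ) / (k : ℝ)) ^ 2 := by
              apply pow_le_pow_left₀ hnonneg hle
          _ = (n : ℝ) ^ 2 * ((1 : ℝ) / (k : ℝ) ^ 2) := by
              field_simp
    _ = (n : ℝ) ^ 2 * ∑ k ∈ Finset.Icc 2 n, (1 : ℝ) / (k : ℝ) ^ 2 := by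
        rw [Finset.mul_sum]
    _ ≤ (n : ℝ) ^ 2 * (π ^ 2 / 6 - 1) := by
        apply mul_le_mul_of_nonneg_left (sum_inv_sq_le n) (by positivity)

/-- **Abstract primitive divisor argument.**
Let `h > 0`, `C ≥ 0`, and let `(d_n)` be a sequence of nonnegative reals with
`|d_n - n² h| ≤ C` for all `n ≥ 1`. Then there is a bound `N = N(h, C)` such that:
whenever `d_n ≤ ∑_{m ∣ n, m < n} d_m` for some `n ≥ 1`, one has the explicit
inequality `n² h (1 - (ζ(2) - 1)) ≤ C (1 + τ(n))` (with `ζ(2) = π²/6` and `τ(n)` the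
number of divisors of `n`), and consequently `n ≤ N`. -/
theorem abstract_primitive_divisor_bound (h C : ℝ) (hh : 0 < h) (hC : 0 ≤ C) :
    ∃ N : ℕ, ∀ d : ℕ → ℝ,
      (∀ n : ℕ, 1 ≤ n → 0 ≤ d n ∧ |d n - (n : ℝ) ^ 2 * h| ≤ C) →
      ∀ n : ℕ, 1 ≤ n → d n ≤ (∑ m ∈ n.properDivisors, d m) →
        (n : ℝ) ^ 2 * h * (1 - (π ^ 2 / 6 - 1)) ≤ C * (1 + (n.divisors.card : ℝ)) ∧
        n ≤ N := by
  have hpi : π ^ 2 < 12 := by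
    nlinarith [Real.pi_lt_d2, Real.pi_pos]
  have hc : (0 : ℝ) < 1 - (π ^ 2 / 6 - 1) := by linarith
  refine ⟨⌈2 * C / (h * (1 - (π ^ 2 / 6 - 1)))⌉₊, ?_⟩
  intro d hd n hn hle
  have hn0 : n ≠ 0 := by omega
  -- lower bound on d n
  have hdl : (n : ℝ) ^ 2 * h - C ≤ d n := by
    have := (hd n hn).2
    rw [abs_le] at this
    linarith [this.1]
  -- upper bound on each d m for proper divisors
  have hup : ∑ m ∈ n.properDivisors, d m
      ≤ (∑ m ∈ n.properDivisors, (m : ℝ) ^ 2) * h + C * n.properDivisors.card := by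
    have step : ∑ m ∈ n.properDivisors, d m ≤ ∑ m ∈ n.properDivisors, ((m : ℝ) ^ 2 * h + C) := by
      apply Finset.sum_le_sum
      intro m hm
      have hm1 : 1 ≤ m := Nat.pos_of_mem_properDivisors hm
      have := (hd m hm1).2
      rw [abs_le] at this
      linarith [this.2]
    rw [Finset.sum_add_distrib, Finset.sum_const, nsmul_eq_mul, ← Finset.sum_mul] at step
    linarith [step]
  have hcard : (n.properDivisors.card : ℝ) ≤ (n.divisors.card : ℝ) := by
    exact_mod_cast Finset.card_le_card (Nat.properDivisors_subset_divisors)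
  have hsumsq := sum_sq_properDivisors n hn
  have main : (n : ℝ) ^ 2 * h * (1 - (π ^ 2 / 6 - 1)) ≤ C * (1 + (n.divisors.card : ℝ)) := by
    nlinarith [mul_le_mul_of_nonneg_right hsumsq hh.le]
  refine ⟨main, ?_⟩
  -- τ(n) ≤ n
  have hτ : (n.divisors.card : ℝ) ≤ (n : ℝ) := by
    have : n.divisors ⊆ Finset.Icc 1 n := by
      intro k hk
      rw [Nat.mem_divisors] at hk
      exact Finset.mem_Icc.2 ⟨Nat.pos_of_dvd_of_pos hk.1 (by omega),
        Nat.le_of_dvd (by omega) hk.1⟩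
    have := Finset.card_le_card this
    rw [Nat.card_Icc] at this
    exact_mod_cast by omega
  have hn1 : (1 : ℝ) ≤ (n : ℝ) := by exact_mod_cast hn
  have hfin : (n : ℝ) ≤ 2 * C / (h * (1 - (π ^ 2 / 6 - 1))) := by
    rw [le_div_iff₀ (by positivity)]
    nlinarith [main]
  have := hfin.trans (Nat.le_ceil _)
  exact_mod_cast this
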